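/- If A is a real n×n matrix such that AD + DAᵀ is positive definite for some positive diagonal matrix D, then every principal submatrix of A (obtained by deleting the same set of rows and columns) also satisfies the corresponding Volterra-Lyapunov condition with the corresponding principal submatrix of D, and hence is nonsingular. -/

import Mathlib

open Matrix

theorem aux_posdef_submatrix {n : ℕ} (M : Matrix (Fin n) (Fin n) ℝ) (hM : M.PosDef)
    (S : Finset (Fin n)) :
    (M.submatrix (fun i : {x // x ∈ S} => i.1) (fun i : {x // x ∈ S} => i.1)).PosDef := by
  refine posDef_iff_dotProduct_mulVec.mpr ⟨hM.1.submatrix _, fun x hx => ?_⟩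
  classical
  set y : Fin n → ℝ := fun j => if h : j ∈ S then x ⟨j, h⟩ else 0 with hy
  have hyne : y ≠ 0 := by
    intro h
    apply hx
    funext i
    have := congrFun h i.1
    simpa [hy, i.2] using this
  have key : dotProduct (star x) ((M.submatrix (fun i : {x // x ∈ S} => i.1) (fun i : {x // x ∈ S} => i.1)) *ᵥ x) = dotProduct (star y) (M *ᵥ y) := by
    simp only [dotProduct, mulVec, star, submatrix_apply, RCLike.star_def, starRingEnd_apply,
      star_trivial]
    have inner : ∀ i : Fin n, (∑ j, M i j * y j) = ∑ j : {x // x ∈ S}, M i j.1 * x j := by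
      intro i
      calc ∑ j, M i j * y j = ∑ j ∈ S, M i j * y j :=
            (Finset.sum_subset S.subset_univ (fun j _ hj => by simp [hy, hj])).symm
        _ = ∑ j : {x // x ∈ S}, M i j.1 * y j.1 := (Finset.sum_coe_sort S _).symm
        _ = ∑ j : {x // x ∈ S}, M i j.1 * x j :=
            Finset.sum_congr rfl fun j _ => by simp [hy, j.2]
    symm
    calc ∑ i, y i * ∑ j, M i j * y j
        = ∑ i ∈ S, y i * ∑ j, M i j * y j :=
          (Finset.sum_subset S.subset_univ (fun j _ hj => by simp [hy, hj])).symm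
      _ = ∑ i : {x // x ∈ S}, y i.1 * ∑ j, M i.1 j * y j := (Finset.sum_coe_sort S _).symm
      _ = ∑ i : {x // x ∈ S}, x i * ∑ j : {x // x ∈ S}, M i.1 j.1 * x j := by
          refine Finset.sum_congr rfl fun i _ => ?_
          rw [inner]
          simp [hy, i.2]
  rw [key]
  exact hM.dotProduct_mulVec_pos hyne

theorem stmt3 {n : ℕ} (A : Matrix (Fin n) (Fin n) ℝ)
    (d : Fin n → ℝ) (hd : ∀ i, 0 < d i)
    (hpd : (A * diagonal d + diagonal d * Aᵀ).PosDef)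
    (S : Finset (Fin n)) :
    let f : {x // x ∈ S} → Fin n := fun i => i.1
    let AS := A.submatrix f f
    (AS * diagonal (fun i => d (f i)) + diagonal (fun i => d (f i)) * ASᵀ).PosDef ∧
      AS.det ≠ 0 := by
  intro f AS
  have heq : AS * diagonal (fun i => d (f i)) + diagonal (fun i => d (f i)) * ASᵀ
      = (A * diagonal d + diagonal d * Aᵀ).submatrix f f := by
    ext i j
    simp [AS, f, mul_diagonal, diagonal_mul, submatrix_apply, Matrix.add_apply, transpose_apply]
  have hpds : (AS * diagonal (fun i => d (f i)) + diagonal (fun i => d (f i)) * ASᵀ).PosDef := by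
    rw [heq]; exact aux_posdef_submatrix _ hpd S
  refine ⟨hpds, fun hdet => ?_⟩
  have hdetT : ASᵀ.det = 0 := by rw [det_transpose]; exact hdet
  obtain ⟨v, hv, hvz⟩ := (Matrix.exists_mulVec_eq_zero_iff).2 hdetT
  have hpos := hpds.dotProduct_mulVec_pos hv
  have hzero : star v ⬝ᵥ ((AS * diagonal (fun i => d (f i)) + diagonal (fun i => d (f i)) * ASᵀ) *ᵥ v) = 0 := by
    have h1 : v ᵥ* AS = 0 := by rw [← mulVec_transpose]; exact hvz
    rw [add_mulVec, dotProduct_add, ← mulVec_mulVec, ← mulVec_mulVec, hvz, mulVec_zero,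
      dotProduct_zero, star_trivial, dotProduct_mulVec, h1, zero_dotProduct, add_zero]
  rw [hzero] at hpos
  exact lt_irrefl 0 hpos
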